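/- Let (R,B) be a ℤ-based rng with s-matrix s, let q ∈ ℕ and ζ a primitive complex q-th root of unity. Suppose every column of s has the form s_i = μ_i · v_i where μ_i is an integer and every entry of the vector v_i is a (nonzero) power of ζ. Then |μ_i| = |μ_j| for all indices i, j. -/

import Mathlib

open scoped BigOperators

/-- Let `(R,B)` be a `ℤ`-based rng with s-matrix `s` (rows
given by an enumeration `χ : Fin n → (A →ₐ[ℂ] ℂ)` of the `n` distinct
characters, `s k i = χ k (b i)`).  If every column has the form
`s_i = μ_i • v_i` with `μ_i ∈ ℤ` and all entries of `v_i` powers of a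
primitive `q`-th root of unity `ζ`, then `|μ_i| = |μ_j|` for all `i, j`. -/
theorem zBasedRng_sMatrix_column_scalars_abs_eq
    {n : ℕ} (A : Type*) [CommRing A] [Algebra ℂ A]
    (b : Module.Basis (Fin n) ℂ A) (N : Fin n → Fin n → Fin n → ℤ) (σ : Fin n → Fin n)
    (hmul : ∀ i j, b i * b j = ∑ m, (N i j m : ℂ) • b m)
    (hσ : ∀ i, σ (σ i) = i)
    (hσN : ∀ i j m, N (σ i) (σ j) m = N i j (σ m))
    (hτ : ∀ i j, (∑ m, (starRingEnd ℂ) (b.repr 1 m) * (N (σ i) j m : ℂ)) =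
      if i = j then (1 : ℂ) else 0)
    (he : ∀ j, (starRingEnd ℂ) (b.repr 1 (σ j)) = b.repr 1 j)
    (q : ℕ) (hq : 0 < q) (ζ : ℂ) (hζ : IsPrimitiveRoot ζ q)
    (χ : Fin n → (A →ₐ[ℂ] ℂ)) (hχ : Function.Injective χ)
    (μ : Fin n → ℤ) (v : Fin n → Fin n → ℂ)
    (hv : ∀ i k, ∃ t : ℕ, v i k = ζ ^ t)
    (hcol : ∀ k i, χ k (b i) = (μ i : ℂ) * v i k) :
    ∀ i j, |μ i| = |μ j| := by
  classical
  intro i j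
  -- the τ functional
  set τ : Module.Dual ℂ A :=
    ∑ m, (starRingEnd ℂ) (b.repr 1 m) • (b.coord m) with hτdef
  have τapp : ∀ a, τ a = ∑ m, (starRingEnd ℂ) (b.repr 1 m) * b.repr a m := by
    intro a
    simp [hτdef, LinearMap.sum_apply, Module.Basis.coord_apply, smul_eq_mul]
  have τb : ∀ l, τ (b l) = (starRingEnd ℂ) (b.repr 1 l) := by
    intro l
    rw [τapp]
    simp [Module.Basis.repr_self, Finsupp.single_apply]
  -- τ on products of basis elements
  have τmulb : ∀ i' j', τ (b i' * b j') = if σ i' = j' then (1:ℂ) else 0 := by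
    intro i' j'
    have h2 := hτ (σ i') j'
    rw [hσ i'] at h2
    rw [hmul i' j', map_sum, ← h2]
    refine Finset.sum_congr rfl fun m _ => ?_
    rw [map_smul, smul_eq_mul, τb, mul_comm]
  -- commutativity of structure constants
  have hcomm : ∀ a c m, (N a c m : ℂ) = (N c a m : ℂ) := by
    intro a c m
    have h1 := congrFun (b.repr_sum_self (fun m' => (N a c m' : ℂ))) m
    have h2 := congrFun (b.repr_sum_self (fun m' => (N c a m' : ℂ))) m
    rw [← hmul a c] at h1
    rw [← hmul c a] at h2
    rw [mul_comm] at h1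
    exact h1.symm.trans h2
  -- the key Frobenius-type identity
  have hstar : ∀ a c m, (N (σ a) c m : ℂ) = (N a m c : ℂ) := by
    intro a c m
    have h1 : τ (b (σ m) * (b (σ a) * b c)) = (N (σ a) c m : ℂ) := by
      rw [hmul (σ a) c, Finset.mul_sum]
      simp only [mul_smul_comm]
      rw [map_sum]
      simp only [map_smul, smul_eq_mul, τmulb, hσ]
      simp
    have h2 : τ (b (σ m) * (b (σ a) * b c)) = (N a m c : ℂ) := by
      rw [← mul_assoc, hmul (σ m) (σ a), Finset.sum_mul]
      simp only [smul_mul_assoc]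
      rw [map_sum]
      simp only [map_smul, smul_eq_mul, τmulb]
      have : ∀ l : Fin n, (if σ l = c then (1:ℂ) else 0) = if l = σ c then 1 else 0 := by
        intro l
        refine if_congr ⟨fun h => ?_, fun h => ?_⟩ rfl rfl
        · rw [← h, hσ]
        · rw [h, hσ]
      simp only [this]
      simp [hσN, hσ, hcomm]
    rw [← h1, h2]
  -- multiplicativity of the s-matrix entries
  have hmulS : ∀ k a c, χ k (b a) * χ k (b c) = ∑ m, (N a c m : ℂ) * χ k (b m) := by
    intro k a c
    rw [← map_mul, hmul a c, map_sum]
    simp [map_smul, smul_eq_mul]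
  -- the diagonal Gram entries are nonzero
  have hHpos : ∀ k, (∑ l, χ k (b l) * (starRingEnd ℂ) (χ k (b l))) ≠ 0 := by
    intro k h0
    have hz : ∀ l, χ k (b l) = 0 := by
      have h1 : ∑ l, (Complex.normSq (χ k (b l)) : ℂ) = 0 := by
        simpa [Complex.mul_conj] using h0
      have h2 : (∑ l, Complex.normSq (χ k (b l))) = 0 := by exact_mod_cast h1
      intro l
      have h3 := (Finset.sum_eq_zero_iff_of_nonneg
        (fun l _ => Complex.normSq_nonneg (χ k (b l)))).mp h2 l (Finset.mem_univ l)
      exact Complex.normSq_eq_zero.mp h3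
    have h1 : (1 : ℂ) = χ k 1 := (map_one (χ k)).symm
    rw [← b.sum_repr 1, map_sum] at h1
    simp [map_smul, hz] at h1
  -- the conjugation property
  have hconj : ∀ k a, χ k (b (σ a)) = (starRingEnd ℂ) (χ k (b a)) := by
    intro k a
    refine mul_right_cancel₀ (hHpos k) ?_
    calc χ k (b (σ a)) * ∑ l, χ k (b l) * (starRingEnd ℂ) (χ k (b l))
        = ∑ l, (χ k (b (σ a)) * χ k (b l)) * (starRingEnd ℂ) (χ k (b l)) := by
          rw [Finset.mul_sum]; exact Finset.sum_congr rfl fun l _ => by ring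
      _ = ∑ l, (∑ m, (N (σ a) l m : ℂ) * χ k (b m)) * (starRingEnd ℂ) (χ k (b l)) := by
          simp only [hmulS]
      _ = ∑ l, (∑ m, ((N a m l : ℂ) * χ k (b m))) * (starRingEnd ℂ) (χ k (b l)) := by
          refine Finset.sum_congr rfl fun l _ => ?_
          congr 1
          exact Finset.sum_congr rfl fun m _ => by rw [hstar]
      _ = ∑ m, ∑ l, ((N a m l : ℂ) * χ k (b m)) * (starRingEnd ℂ) (χ k (b l)) := by
          rw [← Finset.sum_comm]
          exact Finset.sum_congr rfl fun l _ => by rw [Finset.sum_mul]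
      _ = ∑ m, χ k (b m) * (starRingEnd ℂ) (∑ l, (N a m l : ℂ) * χ k (b l)) := by
          refine Finset.sum_congr rfl fun m _ => ?_
          rw [map_sum, Finset.mul_sum]
          refine Finset.sum_congr rfl fun l _ => ?_
          rw [map_mul]
          have : (starRingEnd ℂ) ((N a m l : ℂ)) = (N a m l : ℂ) :=
            map_intCast (starRingEnd ℂ) (N a m l)
          rw [this]; ring
      _ = ∑ m, χ k (b m) * (starRingEnd ℂ) (χ k (b a) * χ k (b m)) := by
          simp only [hmulS]
      _ = (starRingEnd ℂ) (χ k (b a)) * ∑ l, χ k (b l) * (starRingEnd ℂ) (χ k (b l)) := by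
          rw [Finset.mul_sum]
          refine Finset.sum_congr rfl fun m _ => ?_
          rw [map_mul]; ring
  -- powers of ζ are unimodular
  have hvc : ∀ a k, (starRingEnd ℂ) (v a k) * v a k = 1 := by
    intro a k
    obtain ⟨t, ht⟩ := hv a k
    have habs : ‖ζ‖ = 1 := by
      have h := hζ.norm'_eq_one hq.ne'
      simpa using h
    have hz : (starRingEnd ℂ) ζ * ζ = 1 := by
      rw [mul_comm, Complex.mul_conj, Complex.normSq_eq_norm_sq, habs]
      norm_num
    rw [ht, map_pow, ← mul_pow, hz, one_pow]
  have hSS : ∀ k a, χ k (b (σ a)) * χ k (b a) = ((μ a : ℂ))^2 := by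
    intro k a
    rw [hconj k a, hcol k a, map_mul, map_intCast]
    calc (μ a : ℂ) * (starRingEnd ℂ) (v a k) * ((μ a : ℂ) * v a k)
        = (μ a : ℂ)^2 * ((starRingEnd ℂ) (v a k) * v a k) := by ring
      _ = (μ a : ℂ)^2 := by rw [hvc, mul_one]
  have hC : ∀ a k, ∑ m, (N (σ a) a m : ℂ) * χ k (b m) = ((μ a : ℂ))^2 := by
    intro a k
    rw [← hmulS, hSS]
  -- kernel step via linear independence of characters
  have hker : ∀ d : Fin n → ℂ, (∀ k, ∑ m, d m * χ k (b m) = 0) → ∀ m, d m = 0 := by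
    intro d hd m
    haveI : Nonempty (Fin n) := ⟨m⟩
    have hFD : FiniteDimensional ℂ A := Module.Finite.of_basis b
    have hinj : Function.Injective (fun k => (χ k : A →* ℂ)) := by
      intro k l hkl
      apply hχ
      ext a
      exact DFunLike.congr_fun hkl a
    have hli0 := (linearIndependent_monoidHom A ℂ).comp (fun k => (χ k : A →* ℂ)) hinj
    let Φ : Module.Dual ℂ A →ₗ[ℂ] (A → ℂ) :=
      { toFun := fun f => f, map_add' := fun f g => rfl, map_smul' := fun c f => rfl }
    have hli : LinearIndependent ℂ (fun k => (χ k).toLinearMap) := by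
      refine LinearIndependent.of_comp Φ ?_
      exact hli0
    have hcard : Fintype.card (Fin n) = Module.finrank ℂ (Module.Dual ℂ A) := by
      rw [Subspace.dual_finrank_eq, Module.finrank_eq_card_basis b]
    let B' : Module.Basis (Fin n) ℂ (Module.Dual ℂ A) :=
      basisOfLinearIndependentOfCardEqFinrank hli hcard
    have hB' : ∀ k, B' k = (χ k).toLinearMap := fun k =>
      congrFun (coe_basisOfLinearIndependentOfCardEqFinrank hli hcard) k
    set a : A := ∑ l, d l • b l with ha
    have hva : ∀ k, χ k a = 0 := by
      intro k
      rw [ha, map_sum]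
      simpa [map_smul, smul_eq_mul] using hd k
    have h1 := B'.sum_repr (b.coord m)
    have h2 : b.coord m a = 0 := by
      rw [← h1]
      rw [LinearMap.sum_apply]
      refine Finset.sum_eq_zero fun k _ => ?_
      rw [LinearMap.smul_apply, hB', AlgHom.toLinearMap_apply, hva, smul_zero]
    have h3 : b.coord m a = d m := by
      rw [Module.Basis.coord_apply, ha]
      exact congrFun (b.repr_sum_self d) m
    rw [← h3]
    exact h2
  -- the final computation
  have hd : ∀ k, ∑ m, (((μ j:ℂ)^2 * (N (σ i) i m : ℂ) - (μ i:ℂ)^2 * (N (σ j) j m : ℂ))) * χ k (b m) = 0 := by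
    intro k
    have hsplit : ∀ m : Fin n,
        (((μ j:ℂ)^2 * (N (σ i) i m : ℂ) - (μ i:ℂ)^2 * (N (σ j) j m : ℂ))) * χ k (b m)
        = (μ j:ℂ)^2 * ((N (σ i) i m : ℂ) * χ k (b m))
          - (μ i:ℂ)^2 * ((N (σ j) j m : ℂ) * χ k (b m)) := fun m => by ring
    rw [Finset.sum_congr rfl (fun m _ => hsplit m), Finset.sum_sub_distrib,
      ← Finset.mul_sum, ← Finset.mul_sum, hC i k, hC j k]
    ring
  have h0 := hker _ hd
  have hτi := hτ i i
  rw [if_pos rfl] at hτi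
  have hτj := hτ j j
  rw [if_pos rfl] at hτj
  have h4 : (μ j:ℂ)^2 * (∑ m, (starRingEnd ℂ) (b.repr 1 m) * (N (σ i) i m : ℂ))
      = (μ i:ℂ)^2 * (∑ m, (starRingEnd ℂ) (b.repr 1 m) * (N (σ j) j m : ℂ)) := by
    rw [Finset.mul_sum, Finset.mul_sum]
    refine Finset.sum_congr rfl fun m _ => ?_
    linear_combination ((starRingEnd ℂ) (b.repr 1 m)) * h0 m
  rw [hτi, hτj, mul_one, mul_one] at h4
  have hZ : (μ j)^2 = (μ i)^2 := by exact_mod_cast h4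
  exact ((sq_eq_sq_iff_abs_eq_abs (μ j) (μ i)).mp hZ).symm
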